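/- (Gram–Schmidt process) Let V be an innerproduct hyperspace over the real hyperfield and S = {w₁, ..., wₙ} a linearly independent subset. Define v₁ = w₁ and choose v_k ∈ w_k # (−∑_{j=1}^{k−1} (⟨w_k, v_j⟩/‖v_j‖²) * v_j) with v_k ≠ θ for 2 ≤ k ≤ n. Then S' = {v₁, ..., vₙ} is an orthogonal set of non-zero vectors with span(S') = span(S). -/

import Mathlib

/-- Hyperaddition of two sets: `A # B = ⋃_{a∈A, b∈B} a # b`. -/
def hSum {V : Type*} (hadd : V → V → Set V) (A B : Set V) : Set V :=
  ⋃ a ∈ A, ⋃ b ∈ B, hadd a b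

/-- A commutative hypergroup. -/
structure CommHypergroup (V : Type*) where
  hadd : V → V → Set V
  hadd_nonempty : ∀ a b, (hadd a b).Nonempty
  hadd_comm : ∀ a b, hadd a b = hadd b a
  hadd_assoc : ∀ a b c, hSum hadd {a} (hadd b c) = hSum hadd (hadd a b) {c}
  zero : V
  neg : V → V
  neg_spec : ∀ a, zero ∈ hadd a (neg a) ∧ zero ∈ hadd (neg a) a
  neg_unique : ∀ a b, zero ∈ hadd a b → zero ∈ hadd b a → b = neg a
  mem_shift : ∀ a b c, a ∈ hadd b c → b ∈ hadd a (neg c)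

/-- A hyperfield: hyperaddition, ordinary multiplication. -/
structure Hyperfield (F : Type*) extends CommHypergroup F where
  mul : F → F → F
  mul_assoc' : ∀ a b c, mul (mul a b) c = mul a (mul b c)
  mul_comm' : ∀ a b, mul a b = mul b a
  distrib : ∀ a b c, (mul a) '' (hadd b c) = hadd (mul a b) (mul a c)
  mul_zero' : ∀ a, mul a zero = zero
  one : F
  mul_one' : ∀ a, mul a one = a
  mul_inv' : ∀ a, a ≠ zero → ∃ b, mul a b = one

/-- A hypervector space over a hyperfield `K`. -/
structure HypVecSp (F : Type*) (K : Hyperfield F) (V : Type*) extends CommHypergroup V where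
  smul : F → V → Set V
  smul_nonempty : ∀ a α, (smul a α).Nonempty
  smul_hadd : ∀ a α β, (⋃ x ∈ hadd α β, smul a x) ⊆ hSum hadd (smul a α) (smul a β)
  hadd_smul : ∀ a b α, (⋃ c ∈ K.hadd a b, smul c α) ⊆ hSum hadd (smul a α) (smul b α)
  mul_smul' : ∀ a b α, smul (K.mul a b) α = ⋃ x ∈ smul b α, smul a x
  neg_smul' : ∀ a α, smul (K.neg a) α = smul a (neg α)
  one_smul' : ∀ α, α ∈ smul K.one α
  zero_smul' : ∀ α, zero ∈ smul K.zero α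
  zero_smul_zero : smul K.zero zero = {zero}

/-- The hyper-linear combination `λ₁*α₁ # λ₂*α₂ # ⋯ # λₙ*αₙ` of a list of
scalar/vector pairs (the empty combination is `{θ}`, which is neutral for `#`). -/
def combo {F V : Type*} (hadd : V → V → Set V) (smul : F → V → Set V) (z : V) :
    List (F × V) → Set V
  | [] => {z}
  | p :: l => hSum hadd (smul p.1 p.2) (combo hadd smul z l)

/-- The span of a set `A`: all vectors lying in some finite hyper-linear
combination of elements of `A`. -/
def hspan {F V : Type*} (hadd : V → V → Set V) (smul : F → V → Set V) (z : V)
    (A : Set V) : Set V :=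
  {x | ∃ l : List (F × V), l ≠ [] ∧ (∀ p ∈ l, p.2 ∈ A) ∧ x ∈ combo hadd smul z l}

/-- The real hyperfield: a hyperfield structure on `ℝ` whose multiplication,
zero and one are the usual ones. -/
structure RealHyperfield extends Hyperfield ℝ where
  zero_eq : zero = 0
  one_eq : one = 1
  mul_eq : ∀ a b, mul a b = a * b

/-- An innerproduct hyperspace over the real hyperfield. -/
structure InnerHyp (K : RealHyperfield) (V : Type*) extends
    HypVecSp ℝ K.toHyperfield V where
  inner : V → V → ℝ
  inner_pos : ∀ α, α ≠ zero → 0 < inner α α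
  inner_self_eq_zero : ∀ α, inner α α = 0 ↔ α = zero
  inner_symm : ∀ α β, inner α β = inner β α
  sup_hadd : ∀ α β γ, IsLUB ((fun x => inner x γ) '' hadd α β) (inner α γ + inner β γ)
  sup_smul : ∀ a α β, IsLUB ((fun x => inner x β) '' smul a α) (a * inner α β)

section Lemmas

variable {K : RealHyperfield} {V : Type*} (W : InnerHyp K V)

namespace GS

theorem khadd_zero_zero : K.zero ∈ K.hadd K.zero K.zero := by
  have h := K.distrib K.zero K.one K.one
  have h1 : K.mul K.zero K.one = K.zero := by
    rw [K.mul_comm']; exact K.mul_zero' _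
  rw [h1] at h
  obtain ⟨x, hx⟩ := K.hadd_nonempty K.one K.one
  rw [← h]
  exact ⟨x, hx, by rw [K.mul_comm']; exact K.mul_zero' _⟩

theorem zero_mem_hadd_zero : W.zero ∈ W.hadd W.zero W.zero := by
  have h := W.hadd_smul K.zero K.zero W.zero
  rw [W.zero_smul_zero] at h
  have hmem : W.zero ∈ ⋃ c ∈ K.hadd K.zero K.zero, W.smul c W.zero := by
    refine Set.mem_biUnion (khadd_zero_zero (K := K)) (W.zero_smul' _)
  have := h hmem
  simpa [hSum] using this

theorem vneg_zero : W.neg W.zero = W.zero :=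
  (W.neg_unique _ _ (zero_mem_hadd_zero W) (zero_mem_hadd_zero W)).symm

theorem vneg_neg (a : V) : W.neg (W.neg a) = a :=
  (W.neg_unique (W.neg a) a (W.neg_spec a).2 (W.neg_spec a).1).symm

theorem mem_hadd_self_zero (a : V) : a ∈ W.hadd a W.zero := by
  have h := W.mem_shift W.zero a (W.neg a) (W.neg_spec a).1
  rw [vneg_neg] at h
  rw [W.hadd_comm]
  exact h

theorem smul_zero_vec (a : ℝ) : W.smul a W.zero = {W.zero} := by
  have h := W.mul_smul' a K.zero W.zero
  rw [K.mul_zero', W.zero_smul_zero] at h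
  simpa using h.symm

theorem zero_mem_smul_zero (α : V) : W.zero ∈ W.smul (0 : ℝ) α := by
  have := W.zero_smul' α
  rwa [K.zero_eq] at this

theorem mem_smul_one (α : V) : α ∈ W.smul (1 : ℝ) α := by
  have := W.one_smul' α
  rwa [K.one_eq] at this

theorem zero_mem_combo (l : List (ℝ × V))
    (h : ∀ p ∈ l, p.1 = (0 : ℝ) ∨ p.2 = W.zero) :
    W.zero ∈ combo W.hadd W.smul W.zero l := by
  induction l with
  | nil => simp [combo]
  | cons p t ih =>
    have h1 : W.zero ∈ W.smul p.1 p.2 := by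
      rcases h p (List.mem_cons_self) with h' | h'
      · rw [h']; exact zero_mem_smul_zero W _
      · rw [h', smul_zero_vec]; rfl
    have h2 := ih (fun q hq => h q (List.mem_cons_of_mem _ hq))
    exact Set.mem_biUnion h1 (Set.mem_biUnion h2 (zero_mem_hadd_zero W))

theorem inner_neg_eq (β γ : V) :
    W.inner (W.neg β) γ = (K.neg K.one) * W.inner β γ := by
  have h1 := W.sup_smul K.one (W.neg β) γ
  have h2 := W.sup_smul (K.neg K.one) β γ
  rw [W.neg_smul' K.one β] at h2
  have hu := h1.unique h2
  rw [K.one_eq, one_mul] at hu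
  rw [K.one_eq]
  exact hu

theorem inner_zero_left (γ : V) : W.inner W.zero γ = 0 := by
  have h1 := W.sup_smul K.zero γ γ
  have hle : W.inner W.zero γ ≤ K.zero * W.inner γ γ :=
    h1.1 ⟨W.zero, W.zero_smul' γ, rfl⟩
  rw [K.zero_eq, zero_mul] at hle
  have h2 := W.sup_hadd γ W.zero γ
  have hge : W.inner γ γ ≤ W.inner γ γ + W.inner W.zero γ :=
    h2.1 ⟨γ, mem_hadd_self_zero W γ, rfl⟩
  linarith

theorem neg_one_eq (α₀ : V) (hα₀ : α₀ ≠ W.zero) : K.neg K.one = -1 := by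
  set c := K.neg K.one with hcc
  have key : ∀ α γ : V, 0 ≤ (1 + c) * W.inner α γ := by
    intro α γ
    have h := W.sup_hadd α (W.neg α) γ
    have hmem : W.inner W.zero γ ≤ W.inner α γ + W.inner (W.neg α) γ :=
      h.1 ⟨W.zero, (W.neg_spec α).1, rfl⟩
    rw [inner_zero_left, inner_neg_eq] at hmem
    rw [← hcc] at hmem
    linarith
  have hpos : 0 < W.inner α₀ α₀ := W.inner_pos α₀ hα₀
  obtain ⟨x₀, hx₀⟩ := W.smul_nonempty (-1 : ℝ) α₀
  have hneg : W.inner x₀ α₀ ≤ (-1) * W.inner α₀ α₀ :=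
    (W.sup_smul (-1 : ℝ) α₀ α₀).1 ⟨x₀, hx₀, rfl⟩
  have k1 := key α₀ α₀
  have k2 := key x₀ α₀
  nlinarith

theorem inner_neg (hc : K.neg K.one = -1) (β γ : V) :
    W.inner (W.neg β) γ = - W.inner β γ := by
  rw [inner_neg_eq, hc]; ring

theorem inner_hadd_mem (hc : K.neg K.one = -1) {x α β : V}
    (h : x ∈ W.hadd α β) (γ : V) :
    W.inner x γ = W.inner α γ + W.inner β γ := by
  have hle : W.inner x γ ≤ W.inner α γ + W.inner β γ :=
    (W.sup_hadd α β γ).1 ⟨x, h, rfl⟩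
  have h2 := W.mem_shift x α β h
  have hge : W.inner α γ ≤ W.inner x γ + W.inner (W.neg β) γ :=
    (W.sup_hadd x (W.neg β) γ).1 ⟨α, h2, rfl⟩
  rw [inner_neg W hc] at hge
  linarith

theorem neg_mem_smul (hc : K.neg K.one = -1) {x α : V} {a : ℝ}
    (h : x ∈ W.smul a α) : W.neg x ∈ W.smul (-a) α := by
  have hm := W.mul_smul' (K.neg K.one) a α
  have hmul : K.mul (K.neg K.one) a = -a := by rw [K.mul_eq, hc]; ring
  rw [hmul] at hm
  rw [hm]
  refine Set.mem_biUnion h ?_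
  rw [W.neg_smul' K.one x]
  exact W.one_smul' _

theorem inner_smul_mem (hc : K.neg K.one = -1) {x α : V} {a : ℝ}
    (h : x ∈ W.smul a α) (γ : V) :
    W.inner x γ = a * W.inner α γ := by
  have hle : W.inner x γ ≤ a * W.inner α γ :=
    (W.sup_smul a α γ).1 ⟨x, h, rfl⟩
  have h2 := neg_mem_smul W hc h
  have hge : W.inner (W.neg x) γ ≤ (-a) * W.inner α γ :=
    (W.sup_smul (-a) α γ).1 ⟨W.neg x, h2, rfl⟩
  rw [inner_neg W hc] at hge
  linarith

theorem inner_combo (hc : K.neg K.one = -1) {x : V} {l : List (ℝ × V)}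
    (h : x ∈ combo W.hadd W.smul W.zero l) (γ : V) :
    W.inner x γ = (l.map (fun p => p.1 * W.inner p.2 γ)).sum := by
  induction l generalizing x with
  | nil => simp [combo] at h; simp [h, inner_zero_left]
  | cons p t ih =>
    simp only [combo, hSum, Set.mem_iUnion] at h
    obtain ⟨s, hs, u, hu, hx⟩ := h
    rw [inner_hadd_mem W hc hx γ, inner_smul_mem W hc hs γ, ih hu]
    simp
theorem hadd_shuffle {x a b s u : V} (hx : x ∈ W.hadd a b)
    (ha : a ∈ W.hadd s u) : ∃ y ∈ W.hadd u b, x ∈ W.hadd s y := by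
  have h := W.hadd_assoc s u b
  have hmem : x ∈ hSum W.hadd (W.hadd s u) {b} := by
    simp only [hSum, Set.mem_iUnion]
    exact ⟨a, ha, b, rfl, hx⟩
  rw [← h] at hmem
  simp only [hSum, Set.mem_iUnion] at hmem
  obtain ⟨s', hs', y, hy, hxy⟩ := hmem
  simp only [Set.mem_singleton_iff] at hs'
  subst hs'
  exact ⟨y, hy, hxy⟩

theorem mem_combo_hadd {a b x : V} {l1 l2 : List (ℝ × V)} (γ : V)
    (ha : a ∈ combo W.hadd W.smul W.zero l1)
    (hb : b ∈ combo W.hadd W.smul W.zero l2)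
    (hx : x ∈ W.hadd a b) :
    x ∈ combo W.hadd W.smul W.zero (l1 ++ ((0 : ℝ), γ) :: l2) := by
  induction l1 generalizing a x with
  | nil =>
    simp only [combo, Set.mem_singleton_iff] at ha
    subst ha
    simp only [List.nil_append, combo]
    exact Set.mem_biUnion (zero_mem_smul_zero W γ) (Set.mem_biUnion hb hx)
  | cons p t ih =>
    simp only [combo, hSum, Set.mem_iUnion] at ha
    obtain ⟨s, hs, u, hu, hau⟩ := ha
    obtain ⟨y, hy, hxy⟩ := hadd_shuffle W hx hau
    have hy' := ih hu hy
    simp only [List.cons_append, combo, hSum, Set.mem_iUnion]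
    exact ⟨s, hs, y, hy', hxy⟩

theorem mem_combo_smul {b x : V} {a : ℝ} {l : List (ℝ × V)}
    (hb : b ∈ combo W.hadd W.smul W.zero l)
    (hx : x ∈ W.smul a b) :
    x ∈ combo W.hadd W.smul W.zero (l.map fun p => (a * p.1, p.2)) := by
  induction l generalizing b x with
  | nil =>
    simp only [combo, Set.mem_singleton_iff] at hb
    subst hb
    rw [smul_zero_vec] at hx
    simpa [combo] using hx
  | cons p t ih =>
    simp only [combo, hSum, Set.mem_iUnion] at hb
    obtain ⟨s, hs, u, hu, hbu⟩ := hb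
    have hsub := W.smul_hadd a s u
    have hxm : x ∈ ⋃ y ∈ W.hadd s u, W.smul a y := Set.mem_biUnion hbu hx
    have := hsub hxm
    simp only [hSum, Set.mem_iUnion] at this
    obtain ⟨x1, hx1, x2, hx2, hxx⟩ := this
    have hx1' : x1 ∈ W.smul (a * p.1) p.2 := by
      rw [← K.mul_eq, W.mul_smul']
      exact Set.mem_biUnion hs hx1
    have hx2' := ih hu hx2
    simp only [List.map_cons, combo, hSum, Set.mem_iUnion]
    exact ⟨x1, hx1', x2, hx2', hxx⟩

theorem mem_span_self {A : Set V} {α : V} (hα : α ∈ A) :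
    α ∈ hspan W.hadd W.smul W.zero A := by
  refine ⟨[((1 : ℝ), α)], by simp, by simpa using hα, ?_⟩
  simp only [combo, hSum, Set.mem_iUnion]
  exact ⟨α, mem_smul_one W α, W.zero, rfl, mem_hadd_self_zero W α⟩

theorem span_hadd {A : Set V} {a b x : V} {γ : V} (hγ : γ ∈ A)
    (ha : a ∈ hspan W.hadd W.smul W.zero A)
    (hb : b ∈ hspan W.hadd W.smul W.zero A)
    (hx : x ∈ W.hadd a b) : x ∈ hspan W.hadd W.smul W.zero A := by
  obtain ⟨l1, _, h1, ha⟩ := ha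
  obtain ⟨l2, _, h2, hb⟩ := hb
  refine ⟨l1 ++ ((0 : ℝ), γ) :: l2, by simp, ?_, mem_combo_hadd W γ ha hb hx⟩
  intro p hp
  rcases List.mem_append.1 hp with h | h
  · exact h1 p h
  · rcases List.mem_cons.1 h with h | h
    · rw [h]; exact hγ
    · exact h2 p h

theorem span_smul {A : Set V} {b x : V} {a : ℝ}
    (hb : b ∈ hspan W.hadd W.smul W.zero A)
    (hx : x ∈ W.smul a b) : x ∈ hspan W.hadd W.smul W.zero A := by
  obtain ⟨l, hne, hmem, hb⟩ := hb
  refine ⟨l.map fun p => (a * p.1, p.2), by simpa using hne, ?_,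
    mem_combo_smul W hb hx⟩
  intro p hp
  obtain ⟨q, hq, rfl⟩ := List.mem_map.1 hp
  exact hmem q hq

theorem span_neg {A : Set V} {b : V}
    (hb : b ∈ hspan W.hadd W.smul W.zero A) :
    W.neg b ∈ hspan W.hadd W.smul W.zero A := by
  refine span_smul W hb (a := K.neg K.one) ?_
  rw [W.neg_smul' K.one b]
  exact W.one_smul' _

theorem zero_mem_span {A : Set V} {γ : V} (hγ : γ ∈ A) :
    W.zero ∈ hspan W.hadd W.smul W.zero A := by
  refine ⟨[((0 : ℝ), γ)], by simp, by simpa using hγ, ?_⟩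
  exact zero_mem_combo W _ (by simp)

theorem span_combo {A : Set V} {x : V} {l : List (ℝ × V)} {γ : V} (hγ : γ ∈ A)
    (hl : ∀ p ∈ l, p.2 ∈ hspan W.hadd W.smul W.zero A)
    (hx : x ∈ combo W.hadd W.smul W.zero l) :
    x ∈ hspan W.hadd W.smul W.zero A := by
  induction l generalizing x with
  | nil =>
    simp only [combo, Set.mem_singleton_iff] at hx
    subst hx
    exact zero_mem_span W hγ
  | cons p t ih =>
    simp only [combo, hSum, Set.mem_iUnion] at hx
    obtain ⟨s, hs, u, hu, hx⟩ := hx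
    have h1 : s ∈ hspan W.hadd W.smul W.zero A :=
      span_smul W (hl p (List.mem_cons_self)) hs
    have h2 := ih (fun q hq => hl q (List.mem_cons_of_mem _ hq)) hu
    exact span_hadd W hγ h1 h2 hx

theorem span_le {A B : Set V} {γ : V} (hγ : γ ∈ B)
    (h : ∀ a ∈ A, a ∈ hspan W.hadd W.smul W.zero B) :
    hspan W.hadd W.smul W.zero A ⊆ hspan W.hadd W.smul W.zero B := by
  rintro x ⟨l, _, hmem, hx⟩
  exact span_combo W hγ (fun p hp => h p.2 (hmem p hp)) hx
end GS

end Lemmas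
/-- Gram–Schmidt process: from a linearly independent family `w₁, …, wₙ`,
the vectors `v₁ = w₁`, `vₖ ∈ wₖ # (−∑_{j<k} (⟨wₖ,vⱼ⟩/‖vⱼ‖²) * vⱼ)` (chosen
non-zero) form an orthogonal family of non-zero vectors with the same span. -/
theorem gram_schmidt {K : RealHyperfield} {V : Type*} (W : InnerHyp K V)
    {n : ℕ} (hn : 0 < n) (w v : Fin n → V)
    (hli : ∀ l : Fin n → ℝ,
      W.zero ∈ combo W.hadd W.smul W.zero (List.ofFn fun i => (l i, w i)) →
      ∀ i, l i = 0)
    (h0 : v ⟨0, hn⟩ = w ⟨0, hn⟩)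
    (hstep : ∀ k : Fin n, 0 < k.1 →
      v k ≠ W.zero ∧
      v k ∈ hSum W.hadd {w k}
        (W.neg '' combo W.hadd W.smul W.zero
          (List.ofFn fun j : Fin k.1 =>
            (W.inner (w k) (v ⟨j.1, j.2.trans k.2⟩) /
               W.inner (v ⟨j.1, j.2.trans k.2⟩) (v ⟨j.1, j.2.trans k.2⟩),
             v ⟨j.1, j.2.trans k.2⟩)))) :
    (∀ k, v k ≠ W.zero) ∧
    (∀ i j, i ≠ j → W.inner (v i) (v j) = 0) ∧
    hspan W.hadd W.smul W.zero (Set.range v)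
      = hspan W.hadd W.smul W.zero (Set.range w) := by
  classical
  set i0 : Fin n := ⟨0, hn⟩ with hi0
  have w0ne : w i0 ≠ W.zero := by
    intro h
    have hmem : W.zero ∈ combo W.hadd W.smul W.zero
        (List.ofFn fun i => ((if i = i0 then (1:ℝ) else 0), w i)) := by
      apply GS.zero_mem_combo
      intro p hp
      rw [List.mem_ofFn] at hp
      obtain ⟨i, rfl⟩ := hp
      by_cases hii : i = i0
      · right; simp only [hii]; exact h
      · left; simp [hii]
    have := hli _ hmem i0
    simp at this
  have v0ne : v i0 ≠ W.zero := by rw [h0]; exact w0ne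
  have hc : K.neg K.one = -1 := GS.neg_one_eq W (v i0) v0ne
  have vne : ∀ k, v k ≠ W.zero := by
    intro k
    by_cases hk : 0 < k.1
    · exact (hstep k hk).1
    · have : k = i0 := by apply Fin.ext; simp only [hi0]; omega
      rw [this]; exact v0ne
  have orth : ∀ N, ∀ k j : Fin n, k.1 = N → j.1 < k.1 →
      W.inner (v k) (v j) = 0 := by
    intro N
    induction N using Nat.strong_induction_on with
    | _ N IH =>
      intro k j hkN hjk
      have hkpos : 0 < k.1 := Nat.lt_of_le_of_lt (Nat.zero_le _) hjk
      obtain ⟨-, hv⟩ := hstep k hkpos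
      simp only [hSum, Set.mem_iUnion] at hv
      obtain ⟨a, ha, b, hb, hvk⟩ := hv
      rw [Set.mem_singleton_iff] at ha
      subst ha
      obtain ⟨t, ht, rfl⟩ := hb
      rw [GS.inner_hadd_mem W hc hvk, GS.inner_neg W hc,
          GS.inner_combo W hc ht, List.map_ofFn, List.sum_ofFn]
      have hsum : (∑ i : Fin k.1,
          ((fun p : ℝ × V => p.1 * W.inner p.2 (v j)) ∘ fun i : Fin k.1 =>
            (W.inner (w k) (v ⟨i.1, i.2.trans k.2⟩) /
               W.inner (v ⟨i.1, i.2.trans k.2⟩) (v ⟨i.1, i.2.trans k.2⟩),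
             v ⟨i.1, i.2.trans k.2⟩)) i)
          = W.inner (w k) (v j) := by
        rw [Finset.sum_eq_single (⟨j.1, hjk⟩ : Fin k.1)]
        · have hjj : (⟨j.1, hjk.trans k.2⟩ : Fin n) = j := Fin.ext rfl
          simp only [Function.comp_apply, hjj]
          have hne : W.inner (v j) (v j) ≠ 0 := by
            intro h
            exact vne j ((W.inner_self_eq_zero (v j)).1 h)
          field_simp
        · intro i _ hij
          have hvi : i.1 ≠ j.1 := by
            intro h; exact hij (Fin.ext h)
          simp only [Function.comp_apply]
          rcases Nat.lt_or_ge i.1 j.1 with h | h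
          · have := IH j.1 (hkN ▸ hjk) j ⟨i.1, i.2.trans k.2⟩ rfl h
            rw [W.inner_symm] at this
            rw [this, mul_zero]
          · have hji : j.1 < i.1 := by omega
            have := IH i.1 (hkN ▸ i.2) ⟨i.1, i.2.trans k.2⟩ j rfl hji
            rw [this, mul_zero]
        · intro h
          exact absurd (Finset.mem_univ _) h
      rw [hsum]
      ring
  have orth2 : ∀ i j, i ≠ j → W.inner (v i) (v j) = 0 := by
    intro i j hij
    rcases Nat.lt_or_ge i.1 j.1 with h | h
    · rw [W.inner_symm]; exact orth j.1 j i rfl h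
    · have : j.1 < i.1 := by
        rcases Nat.lt_or_ge j.1 i.1 with h' | h'
        · exact h'
        · exact absurd (Fin.ext (le_antisymm h' h)) hij
      exact orth i.1 i j rfl this
  refine ⟨vne, orth2, ?_⟩
  have hwmem : w i0 ∈ Set.range w := ⟨i0, rfl⟩
  have hvmem : v i0 ∈ Set.range v := ⟨i0, rfl⟩
  have vspan : ∀ N, ∀ k : Fin n, k.1 = N →
      v k ∈ hspan W.hadd W.smul W.zero (Set.range w) := by
    intro N
    induction N using Nat.strong_induction_on with
    | _ N IH =>
      intro k hkN
      by_cases hk : 0 < k.1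
      · obtain ⟨-, hv⟩ := hstep k hk
        simp only [hSum, Set.mem_iUnion] at hv
        obtain ⟨a, ha, b, hb, hvk⟩ := hv
        rw [Set.mem_singleton_iff] at ha
        subst ha
        obtain ⟨t, ht, rfl⟩ := hb
        have hts : t ∈ hspan W.hadd W.smul W.zero (Set.range w) := by
          refine GS.span_combo W hwmem ?_ ht
          intro p hp
          rw [List.mem_ofFn] at hp
          obtain ⟨i, rfl⟩ := hp
          exact IH i.1 (hkN ▸ i.2) ⟨i.1, i.2.trans k.2⟩ rfl
        exact GS.span_hadd W hwmem (GS.mem_span_self W ⟨k, rfl⟩)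
          (GS.span_neg W hts) hvk
      · have : k = i0 := by apply Fin.ext; simp only [hi0]; omega
        rw [this, h0]
        exact GS.mem_span_self W hwmem
  have wspan : ∀ k : Fin n, w k ∈ hspan W.hadd W.smul W.zero (Set.range v) := by
    intro k
    by_cases hk : 0 < k.1
    · obtain ⟨-, hv⟩ := hstep k hk
      simp only [hSum, Set.mem_iUnion] at hv
      obtain ⟨a, ha, b, hb, hvk⟩ := hv
      rw [Set.mem_singleton_iff] at ha
      subst ha
      obtain ⟨t, ht, rfl⟩ := hb
      have hshift := W.mem_shift (v k) (w k) (W.neg t) hvk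
      rw [GS.vneg_neg] at hshift
      have hts : t ∈ hspan W.hadd W.smul W.zero (Set.range v) := by
        refine GS.span_combo W hvmem ?_ ht
        intro p hp
        rw [List.mem_ofFn] at hp
        obtain ⟨i, rfl⟩ := hp
        exact GS.mem_span_self W ⟨_, rfl⟩
      exact GS.span_hadd W hvmem (GS.mem_span_self W ⟨k, rfl⟩) hts hshift
    · have : k = i0 := by apply Fin.ext; simp only [hi0]; omega
      rw [this, ← h0]
      exact GS.mem_span_self W hvmem
  apply Set.Subset.antisymm
  · refine GS.span_le W hwmem ?_
    rintro x ⟨k, rfl⟩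
    exact vspan k.1 k rfl
  · refine GS.span_le W hvmem ?_
    rintro x ⟨k, rfl⟩
    exact wspan k
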